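/- For density operators ρ and σ on a finite-dimensional Hilbert space, the fidelity F(ρ,σ) = ‖√ρ√σ‖₁² and trace distance satisfy 1 − √F(ρ,σ) ≤ (1/2)‖ρ − σ‖₁ ≤ √(1 − F(ρ,σ)) (the Fuchs–van de Graaf inequalities). -/

import Mathlib

open Matrix Kronecker BigOperators ComplexOrder

/-- The matrix square root `Matrix.PosSemidef.sqrt` as Mathlib (Dec 2024) defined it. -/
noncomputable def posSemidefSqrt {n : Type*} [Fintype n] [DecidableEq n] {A : Matrix n n ℂ}
    (hA : A.PosSemidef) : Matrix n n ℂ :=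
  (hA.1.eigenvectorUnitary : Matrix n n ℂ) * diagonal ((↑) ∘ Real.sqrt ∘ hA.1.eigenvalues) *
    star (hA.1.eigenvectorUnitary : Matrix n n ℂ)

noncomputable def traceNorm {n : Type*} [Fintype n] [DecidableEq n] (A : Matrix n n ℂ) : ℝ :=
  (posSemidefSqrt (Matrix.posSemidef_conjTranspose_mul_self A)).trace.re

open scoped Classical in
noncomputable def matSqrt {n : Type*} [Fintype n] [DecidableEq n] (A : Matrix n n ℂ) : Matrix n n ℂ :=
  if h : A.PosSemidef then posSemidefSqrt h else 0

noncomputable def fidelity {n : Type*} [Fintype n] [DecidableEq n] (ρ σ : Matrix n n ℂ) : ℝ :=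
  (traceNorm (matSqrt ρ * matSqrt σ)) ^ 2

def IsDensity {n : Type*} [Fintype n] [DecidableEq n] (ρ : Matrix n n ℂ) : Prop :=
  ρ.PosSemidef ∧ ρ.trace = 1

def SeparableState {a b : Type*} [Fintype a] [Fintype b] [DecidableEq a] [DecidableEq b]
    (ρ : Matrix (a × b) (a × b) ℂ) : Prop :=
  ∃ (m : ℕ) (p : Fin m → ℝ) (σ : Fin m → Matrix a a ℂ) (τ : Fin m → Matrix b b ℂ),
    (∀ i, 0 ≤ p i) ∧ (∑ i, p i = 1) ∧ (∀ i, IsDensity (σ i)) ∧ (∀ i, IsDensity (τ i)) ∧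
    ρ = ∑ i, (p i : ℂ) • (σ i ⊗ₖ τ i)

noncomputable def permUnitary {b : Type*} [Fintype b] [DecidableEq b] {k : ℕ}
    (π : Equiv.Perm (Fin k)) : Matrix (Fin k → b) (Fin k → b) ℂ :=
  Equiv.Perm.permMatrix ℂ (Equiv.arrowCongr π (Equiv.refl b))

def IsKExtension {a b : Type*} [Fintype a] [Fintype b] [DecidableEq a] [DecidableEq b] (m : ℕ)
    (ρ : Matrix (a × b) (a × b) ℂ)
    (ω : Matrix (a × (Fin (m + 1) → b)) (a × (Fin (m + 1) → b)) ℂ) : Prop :=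
  ω.PosSemidef ∧ ω.trace = 1 ∧
  (∀ π : Equiv.Perm (Fin (m + 1)),
    ((1 : Matrix a a ℂ) ⊗ₖ permUnitary π) * ω * ((1 : Matrix a a ℂ) ⊗ₖ permUnitary π)ᴴ = ω) ∧
  (∀ p q : a × b, ρ p q = ∑ r : Fin m → b, ω (p.1, Fin.cons p.2 r) (q.1, Fin.cons q.2 r))

/-- `ρ` is `k`-extendible (with `k` copies of the `B` system). -/
def IsKExtendible {a b : Type*} [Fintype a] [Fintype b] [DecidableEq a] [DecidableEq b] (k : ℕ)
    (ρ : Matrix (a × b) (a × b) ℂ) : Prop :=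
  ∃ m : ℕ, k = m + 1 ∧ ∃ ω, IsKExtension m ρ ω

def IsPOVM {x b : Type*} [Fintype x] [Fintype b] [DecidableEq b] (Λ : x → Matrix b b ℂ) : Prop :=
  (∀ i, (Λ i).PosSemidef) ∧ ∑ i, Λ i = 1

noncomputable def povmOut {a b x : Type*} [Fintype a] [Fintype b] [Fintype x] [DecidableEq x]
    (Λ : x → Matrix b b ℂ) (X : Matrix (a × b) (a × b) ℂ) : Matrix (a × x) (a × x) ℂ :=
  fun p q => if p.2 = q.2 then ∑ j : b, ∑ j' : b, (Λ p.2) j j' * X (p.1, j') (q.1, j) else 0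

noncomputable def loccDist {a b : Type*} [Fintype a] [Fintype b] [DecidableEq a] [DecidableEq b]
    (ρ σ : Matrix (a × b) (a × b) ℂ) : ℝ :=
  sSup {r : ℝ | ∃ (x : Type) (_ : Fintype x) (_ : DecidableEq x) (Λ : x → Matrix b b ℂ),
    IsPOVM Λ ∧ r = traceNorm (povmOut Λ ρ - povmOut Λ σ)}


section PsdSqrtAux
open scoped MatrixOrder
variable {n : Type*} [Fintype n] [DecidableEq n]

lemma posSemidefSqrt_eq_cfc {A : Matrix n n ℂ} (hA : A.PosSemidef) :
    posSemidefSqrt hA = CFC.sqrt A := by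
  rw [CFC.sqrt_eq_real_sqrt A (Matrix.nonneg_iff_posSemidef.mpr hA), cfcₙ_eq_cfc, hA.1.cfc_eq,
    IsHermitian.cfc, Unitary.conjStarAlgAut_apply]
  rfl

lemma Matrix.PosSemidef.posSemidef_sqrt {A : Matrix n n ℂ} (hA : A.PosSemidef) :
    (posSemidefSqrt hA).PosSemidef := by
  rw [posSemidefSqrt_eq_cfc, ← Matrix.nonneg_iff_posSemidef]
  exact CFC.sqrt_nonneg A

lemma Matrix.PosSemidef.sqrt_mul_self {A : Matrix n n ℂ} (hA : A.PosSemidef) :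
    posSemidefSqrt hA * posSemidefSqrt hA = A := by
  rw [posSemidefSqrt_eq_cfc]
  exact CFC.sqrt_mul_sqrt_self A (Matrix.nonneg_iff_posSemidef.mpr hA)

lemma Matrix.PosSemidef.sq_sqrt {A : Matrix n n ℂ} (hA : A.PosSemidef) :
    posSemidefSqrt hA ^ 2 = A := by
  rw [sq]; exact hA.sqrt_mul_self

lemma Matrix.PosSemidef.eq_of_sq_eq_sq {A B : Matrix n n ℂ} (hA : A.PosSemidef)
    (hB : B.PosSemidef) (h : A ^ 2 = B ^ 2) : A = B := by
  have hA' := Matrix.nonneg_iff_posSemidef.mpr hA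
  have hB' := Matrix.nonneg_iff_posSemidef.mpr hB
  have h2 := Matrix.nonneg_iff_posSemidef.mpr (hA.pow 2)
  have h3 := Matrix.nonneg_iff_posSemidef.mpr (hB.pow 2)
  have h1 : CFC.sqrt (A ^ 2) = A := (CFC.sqrt_eq_iff _ _ h2 hA').mpr (sq A).symm
  have h4 : CFC.sqrt (B ^ 2) = B := (CFC.sqrt_eq_iff _ _ h3 hB').mpr (sq B).symm
  rw [← h1, ← h4, h]

end PsdSqrtAux

section FvdGAux

open scoped InnerProductSpace
set_option maxHeartbeats 1000000
set_option linter.unusedSectionVars false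

variable {n : Type*} [Fintype n] [DecidableEq n]

lemma trace_mul_diag (X : Matrix n n ℂ) (d : n → ℂ) :
    (X * diagonal d).trace = ∑ i, X i i * d i := by
  simp [Matrix.trace, Matrix.mul_apply, Matrix.diagonal, Finset.sum_ite_eq, Matrix.diag]

lemma trace_diag_mul (X : Matrix n n ℂ) (d : n → ℂ) :
    (diagonal d * X).trace = ∑ i, d i * X i i := by
  simp [Matrix.trace, Matrix.mul_apply, Matrix.diagonal, Matrix.diag]

lemma conj_mul_conj {V : Matrix n n ℂ} (hV : star V * V = 1) (a b : n → ℂ) :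
    (V * diagonal a * star V) * (V * diagonal b * star V)
      = V * diagonal (fun i => a i * b i) * star V := by
  have h1 : star V * (V * (diagonal b * star V)) = diagonal b * star V := by
    rw [← mul_assoc, hV, one_mul]
  calc (V * diagonal a * star V) * (V * diagonal b * star V)
      = V * (diagonal a * (star V * (V * (diagonal b * star V)))) := by simp only [mul_assoc]
    _ = V * (diagonal a * (diagonal b * star V)) := by rw [h1]
    _ = V * (diagonal (fun i => a i * b i) * star V) := by
        rw [← mul_assoc (diagonal a), diagonal_mul_diagonal]
    _ = V * diagonal (fun i => a i * b i) * star V := by simp only [mul_assoc]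
    
lemma trace_conj (V : Matrix n n ℂ) (hV : star V * V = 1) (a : n → ℂ) :
    (V * diagonal a * star V).trace = ∑ i, a i := by
  rw [Matrix.trace_mul_cycle, hV, one_mul]
  simp [Matrix.trace, Matrix.diag]

lemma psd_trace_real {X : Matrix n n ℂ} (hX : X.PosSemidef) :
    X.trace = ((X.trace.re : ℝ) : ℂ) ∧ 0 ≤ X.trace.re := by
  have h1 : ∀ i, 0 ≤ X i i := by
    intro i
    exact hX.diag_nonneg
  have h2 : 0 ≤ X.trace := by
    apply Finset.sum_nonneg; intro i _; exact h1 i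
  obtain ⟨hre, him⟩ := Complex.nonneg_iff.mp h2
  exact ⟨(Complex.ext (by simp) (by simp [← him])).symm, hre⟩

/-- sign-unitary decomposition for Hermitian matrices -/
lemma herm_struct (H : Matrix n n ℂ) (hH : H.IsHermitian) :
    ∃ (V : Matrix n n ℂ) (lam : n → ℝ) (W : Matrix n n ℂ),
      star V * V = 1 ∧ V * star V = 1 ∧
      H = V * diagonal (fun i => ((lam i : ℝ) : ℂ)) * star V ∧
      Wᴴ * W = 1 ∧ Wᴴ = W ∧
      W * H = V * diagonal (fun i => ((|lam i| : ℝ) : ℂ)) * star V ∧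
      H * W = V * diagonal (fun i => ((|lam i| : ℝ) : ℂ)) * star V ∧
      traceNorm H = ∑ i, |lam i| := by
  set V : Matrix n n ℂ := (hH.eigenvectorUnitary : Matrix n n ℂ) with hVdef
  set lam := hH.eigenvalues
  have hV1 : star V * V = 1 := Matrix.mem_unitaryGroup_iff'.mp hH.eigenvectorUnitary.2
  have hV2 : V * star V = 1 := Matrix.mem_unitaryGroup_iff.mp hH.eigenvectorUnitary.2
  have hspec : H = V * diagonal (fun i => ((lam i : ℝ) : ℂ)) * star V := by
    have := hH.spectral_theorem
    exact this
  set s : n → ℝ := fun i => if lam i < 0 then -1 else 1 with hs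
  set W : Matrix n n ℂ := V * diagonal (fun i => ((s i : ℝ) : ℂ)) * star V with hW
  have hdiagconj : ∀ (c : n → ℝ), (V * diagonal (fun i => ((c i : ℝ) : ℂ)) * star V)ᴴ
      = V * diagonal (fun i => ((c i : ℝ) : ℂ)) * star V := by
    intro c
    have h1 : (star fun i => ((c i : ℝ) : ℂ)) = fun i => ((c i : ℝ) : ℂ) := by
      funext i; simp [Pi.star_apply, Complex.conj_ofReal]
    simp only [Matrix.star_eq_conjTranspose, conjTranspose_mul,
      conjTranspose_conjTranspose, diagonal_conjTranspose, h1, mul_assoc]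
  have hWH : Wᴴ = W := hdiagconj s
  have hs2 : ∀ i, ((s i : ℝ) : ℂ) * ((s i : ℝ) : ℂ) = 1 := by
    intro i; by_cases h : lam i < 0 <;> simp [hs, h]
  have hWU : Wᴴ * W = 1 := by
    rw [hWH, hW, conj_mul_conj hV1]
    have : (fun i => ((s i : ℝ) : ℂ) * ((s i : ℝ) : ℂ)) = fun _ => (1:ℂ) := funext hs2
    rw [this, diagonal_one, mul_one, hV2]
  have habs : ∀ i, ((s i : ℝ) : ℂ) * ((lam i : ℝ) : ℂ) = ((|lam i| : ℝ) : ℂ) := by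
    intro i
    by_cases h : lam i < 0
    · rw [abs_of_neg h]; simp [hs, h]
    · rw [abs_of_nonneg (not_lt.mp h)]; simp [hs, h]
  have hWHmul : W * H = V * diagonal (fun i => ((|lam i| : ℝ) : ℂ)) * star V := by
    rw [hW, hspec, conj_mul_conj hV1]
    congr 2
    exact congrArg _ (funext habs)
  have hHWmul : H * W = V * diagonal (fun i => ((|lam i| : ℝ) : ℂ)) * star V := by
    rw [hspec, hW, conj_mul_conj hV1]
    congr 2
    exact congrArg _ (funext fun i => by rw [mul_comm]; exact habs i)
  set absH : Matrix n n ℂ := V * diagonal (fun i => ((|lam i| : ℝ) : ℂ)) * star V with habsH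
  have habsPSD : absH.PosSemidef := by
    have key : absH = (V * diagonal (fun i => ((Real.sqrt |lam i| : ℝ) : ℂ)))
        * (V * diagonal (fun i => ((Real.sqrt |lam i| : ℝ) : ℂ)))ᴴ := by
      rw [conjTranspose_mul, diagonal_conjTranspose]
      have h1 : (star fun i => ((Real.sqrt |lam i| : ℝ) : ℂ)) = fun i => ((Real.sqrt |lam i| : ℝ) : ℂ) := by
        funext i; simp [Pi.star_apply, Complex.conj_ofReal]
      rw [h1, habsH]
      have h2 : diagonal (fun i => ((Real.sqrt |lam i| : ℝ) : ℂ)) * diagonal (fun i => ((Real.sqrt |lam i| : ℝ) : ℂ))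
          = diagonal (fun i => ((|lam i| : ℝ) : ℂ)) := by
        rw [diagonal_mul_diagonal]
        have : (fun i => ((Real.sqrt |lam i| : ℝ) : ℂ) * ((Real.sqrt |lam i| : ℝ) : ℂ))
            = fun i => ((|lam i| : ℝ) : ℂ) := by
          funext i; rw [← Complex.ofReal_mul, Real.mul_self_sqrt (abs_nonneg _)]
        rw [this]
      calc V * diagonal (fun i => ((|lam i| : ℝ) : ℂ)) * star V
          = V * (diagonal (fun i => ((Real.sqrt |lam i| : ℝ) : ℂ)) * diagonal (fun i => ((Real.sqrt |lam i| : ℝ) : ℂ))) * star V := by rw [h2]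
        _ = V * diagonal (fun i => ((Real.sqrt |lam i| : ℝ) : ℂ)) * (diagonal (fun i => ((Real.sqrt |lam i| : ℝ) : ℂ)) * Vᴴ) := by
            rw [Matrix.star_eq_conjTranspose]; simp only [mul_assoc]
    rw [key]
    exact Matrix.posSemidef_self_mul_conjTranspose _
  have hsq : absH ^ 2 = Hᴴ * H := by
    rw [pow_two, habsH, conj_mul_conj hV1, hH.eq]
    conv_rhs => rw [hspec]
    rw [conj_mul_conj hV1]
    congr 2
    apply congrArg
    funext i
    rw [← Complex.ofReal_mul, ← Complex.ofReal_mul, abs_mul_abs_self]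
  have hsqrt_eq : posSemidefSqrt (Matrix.posSemidef_conjTranspose_mul_self H) = absH := by
    apply Matrix.PosSemidef.eq_of_sq_eq_sq (Matrix.posSemidef_conjTranspose_mul_self H).posSemidef_sqrt habsPSD
    rw [(Matrix.posSemidef_conjTranspose_mul_self H).sq_sqrt, hsq]
  have htn : traceNorm H = ∑ i, |lam i| := by
    rw [traceNorm, hsqrt_eq, habsH, trace_conj V hV1, ← Complex.ofReal_sum]
    simp
  exact ⟨V, lam, W, hV1, hV2, hspec, hWU, hWH, hWHmul, hHWmul, htn⟩

lemma toEuclideanLin_mul_apply (X Y : Matrix n n ℂ) (v : EuclideanSpace ℂ n) :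
    Matrix.toEuclideanLin (X * Y) v = Matrix.toEuclideanLin X (Matrix.toEuclideanLin Y v) := by
  simp [Matrix.toEuclideanLin_apply, Matrix.mulVec_mulVec]

/-- Polar decomposition -/
lemma polar_exists (M : Matrix n n ℂ) :
    ∃ Wp : Matrix n n ℂ, Wpᴴ * Wp = 1 ∧
      Wp * posSemidefSqrt (Matrix.posSemidef_conjTranspose_mul_self M) = M := by
  set P : Matrix n n ℂ := posSemidefSqrt (Matrix.posSemidef_conjTranspose_mul_self M) with hPdef
  have hP : P.PosSemidef := (Matrix.posSemidef_conjTranspose_mul_self M).posSemidef_sqrt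
  have hPM : Pᴴ * P = Mᴴ * M := by
    rw [hP.1.eq, hPdef, (Matrix.posSemidef_conjTranspose_mul_self M).sqrt_mul_self]
  set p := Matrix.toEuclideanLin P with hp
  set f := Matrix.toEuclideanLin M with hf
  have hinner : ∀ v : EuclideanSpace ℂ n, ⟪p v, p v⟫_ℂ = ⟪f v, f v⟫_ℂ := by
    intro v
    have h1 : ⟪p v, p v⟫_ℂ = ⟪v, Matrix.toEuclideanLin (Pᴴ * P) v⟫_ℂ := by
      rw [toEuclideanLin_mul_apply, Matrix.toEuclideanLin_conjTranspose_eq_adjoint,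
        LinearMap.adjoint_inner_right]
    have h2 : ⟪f v, f v⟫_ℂ = ⟪v, Matrix.toEuclideanLin (Mᴴ * M) v⟫_ℂ := by
      rw [toEuclideanLin_mul_apply, Matrix.toEuclideanLin_conjTranspose_eq_adjoint,
        LinearMap.adjoint_inner_right]
    rw [h1, h2, hPM]
  have hnorm : ∀ v : EuclideanSpace ℂ n, ‖p v‖ = ‖f v‖ := by
    intro v
    rw [@norm_eq_sqrt_re_inner ℂ, @norm_eq_sqrt_re_inner ℂ, hinner]
  have hker : LinearMap.ker p ≤ LinearMap.ker f := by
    intro v hv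
    rw [LinearMap.mem_ker] at hv ⊢
    have := hnorm v
    rw [hv, norm_zero] at this
    exact norm_eq_zero.mp this.symm
  set L : LinearMap.range p →ₗ[ℂ] EuclideanSpace ℂ n :=
    ((LinearMap.ker p).liftQ f hker).comp p.quotKerEquivRange.symm.toLinearMap with hL
  have hLap : ∀ v : EuclideanSpace ℂ n, L ⟨p v, LinearMap.mem_range_self p v⟩ = f v := by
    intro v
    rw [hL, LinearMap.comp_apply]
    have : p.quotKerEquivRange.symm ⟨p v, LinearMap.mem_range_self p v⟩
        = Submodule.Quotient.mk v := by
      rw [LinearEquiv.symm_apply_eq]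
      exact Subtype.ext (p.quotKerEquivRange_apply_mk v).symm
    rw [LinearEquiv.coe_toLinearMap, this, Submodule.liftQ_apply]
  have hLnorm : ∀ w : LinearMap.range p, ‖L w‖ = ‖w‖ := by
    intro w
    obtain ⟨v, hv⟩ := w.2
    have hw : w = ⟨p v, LinearMap.mem_range_self p v⟩ := Subtype.ext hv.symm
    rw [hw, hLap, ← hnorm]
    rfl
  set Li : LinearMap.range p →ₗᵢ[ℂ] EuclideanSpace ℂ n := ⟨L, hLnorm⟩ with hLi
  set Wl := Li.extend with hWl
  set Wp := Matrix.toEuclideanLin.symm Wl.toLinearMap with hWp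
  have hWlin : Matrix.toEuclideanLin Wp = Wl.toLinearMap := by
    rw [hWp, LinearEquiv.apply_symm_apply]
  have hfact : Wp * P = M := by
    apply Matrix.toEuclideanLin.injective
    apply LinearMap.ext
    intro v
    rw [toEuclideanLin_mul_apply, hWlin]
    change Wl (p v) = f v
    have : p v = (⟨p v, LinearMap.mem_range_self p v⟩ : LinearMap.range p) := rfl
    rw [this, Li.extend_apply]
    exact hLap v
  refine ⟨Wp, ?_, hfact⟩
  ext i j
  have hcol : ∀ (i k : n), (Wl (EuclideanSpace.single i 1)) k = Wp k i := by
    intro i k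
    have h1 : Wl (EuclideanSpace.single i 1) = Matrix.toEuclideanLin Wp (EuclideanSpace.single i 1) := by
      rw [hWlin]; rfl
    rw [h1, Matrix.toEuclideanLin_apply]
    simp [Matrix.mulVec_single]
  have hip := Wl.inner_map_map (EuclideanSpace.single i (1:ℂ)) (EuclideanSpace.single j (1:ℂ))
  have hL2 : ⟪Wl (EuclideanSpace.single i (1:ℂ)), Wl (EuclideanSpace.single j (1:ℂ))⟫_ℂ
      = ∑ k, (starRingEnd ℂ) (Wp k i) * Wp k j := by
    rw [PiLp.inner_apply]
    exact Finset.sum_congr rfl fun k _ => by rw [hcol, hcol]; simp [RCLike.inner_apply]; ring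
  have hR : ⟪(EuclideanSpace.single i (1:ℂ)), (EuclideanSpace.single j (1:ℂ))⟫_ℂ
      = if i = j then 1 else 0 := by
    rw [PiLp.inner_apply]
    by_cases h : i = j
    · subst h
      simp [EuclideanSpace.single_apply, Finset.sum_ite_eq', apply_ite]
    · simp [EuclideanSpace.single_apply, h, apply_ite, Finset.sum_ite_eq']
      intro hji
      exact absurd hji.symm h
  rw [Matrix.mul_apply, Matrix.one_apply]
  simp only [Matrix.conjTranspose_apply]
  calc ∑ k, star (Wp k i) * Wp k j = ∑ k, (starRingEnd ℂ) (Wp k i) * Wp k j := rfl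
    _ = if i = j then 1 else 0 := by rw [← hL2, hip, hR]

lemma trace_mul_diag' (X : Matrix n n ℂ) (d : n → ℂ) :
    (X * diagonal d).trace = ∑ i, X i i * d i := trace_mul_diag X d

/-- diagonal entries of a matrix with orthonormal columns have `re ≤ 1` -/
lemma unitary_diag_re_le_one {G : Matrix n n ℂ} (hG : Gᴴ * G = 1) (i : n) :
    (G i i).re ≤ 1 := by
  have h1 : ∑ k, ((starRingEnd ℂ) (G k i)) * G k i = 1 := by
    have := congrFun (congrFun hG i) i
    rw [Matrix.mul_apply] at this
    simpa [Matrix.one_apply, Matrix.conjTranspose_apply] using this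
  have h2c : (∑ k, (Complex.normSq (G k i) : ℂ)) = 1 := by
    rw [← h1]
    exact Finset.sum_congr rfl fun k _ => by rw [mul_comm, Complex.mul_conj]
  have h2 : ∑ k, Complex.normSq (G k i) = 1 := by
    have : ((∑ k, Complex.normSq (G k i) : ℝ) : ℂ) = 1 := by
      rw [Complex.ofReal_sum]; exact h2c
    exact_mod_cast this
  have h3 : Complex.normSq (G i i) ≤ 1 := by
    rw [← h2]
    exact Finset.single_le_sum (f := fun k => Complex.normSq (G k i))
      (fun k _ => Complex.normSq_nonneg _) (Finset.mem_univ i)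
  calc (G i i).re ≤ |(G i i).re| := le_abs_self _
    _ ≤ ‖G i i‖ := Complex.abs_re_le_norm _
    _ ≤ 1 := by
        rw [← Real.sqrt_one]
        rw [Complex.norm_def]
        exact Real.sqrt_le_sqrt h3

/-- dual bound : Re tr(U M) ≤ ‖M‖₁ for any coisometry U -/
lemma re_trace_unitary_mul_le (M U : Matrix n n ℂ) (hU : Uᴴ * U = 1) :
    (U * M).trace.re ≤ traceNorm M := by
  obtain ⟨Wp, hWp1, hWp2⟩ := polar_exists M
  set P : Matrix n n ℂ := posSemidefSqrt (Matrix.posSemidef_conjTranspose_mul_self M) with hPdef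
  have hP : P.PosSemidef := (Matrix.posSemidef_conjTranspose_mul_self M).posSemidef_sqrt
  set V : Matrix n n ℂ := (hP.1.eigenvectorUnitary : Matrix n n ℂ) with hVdef
  set lam := hP.1.eigenvalues
  have hlam : ∀ i, 0 ≤ lam i := hP.eigenvalues_nonneg
  have hV1 : star V * V = 1 := Matrix.mem_unitaryGroup_iff'.mp hP.1.eigenvectorUnitary.2
  have hV2 : V * star V = 1 := Matrix.mem_unitaryGroup_iff.mp hP.1.eigenvectorUnitary.2
  have hspec : P = V * diagonal (fun i => ((lam i : ℝ) : ℂ)) * star V := by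
    have := hP.1.spectral_theorem
    exact this
  set G : Matrix n n ℂ := star V * (U * Wp) * V with hG
  have hGU : Gᴴ * G = 1 := by
    have hUW : (U * Wp)ᴴ * (U * Wp) = 1 := by
      calc (U * Wp)ᴴ * (U * Wp) = Wpᴴ * (Uᴴ * U) * Wp := by
            simp only [conjTranspose_mul, mul_assoc]
        _ = 1 := by rw [hU, mul_one, hWp1]
    have hV2' : V * Vᴴ = 1 := by rw [← Matrix.star_eq_conjTranspose]; exact hV2
    have hV1' : Vᴴ * V = 1 := by rw [← Matrix.star_eq_conjTranspose]; exact hV1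
    calc Gᴴ * G = Vᴴ * (Wpᴴ * (Uᴴ * (V * (Vᴴ * (U * (Wp * V)))))) := by
          simp only [hG, Matrix.star_eq_conjTranspose, conjTranspose_mul,
            conjTranspose_conjTranspose, mul_assoc]
      _ = Vᴴ * (Wpᴴ * (Uᴴ * (U * (Wp * V)))) := by rw [← mul_assoc V Vᴴ, hV2', one_mul]
      _ = Vᴴ * (Wpᴴ * (Wp * V)) := by rw [← mul_assoc Uᴴ U, hU, one_mul]
      _ = Vᴴ * V := by rw [← mul_assoc Wpᴴ Wp, hWp1, one_mul]
      _ = 1 := hV1' 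
  have htr : (U * M).trace = ∑ i, G i i * ((lam i : ℝ) : ℂ) := by
    have : U * M = (U * Wp) * P := by rw [← hWp2, mul_assoc]
    rw [this, hspec]
    calc ((U * Wp) * (V * diagonal (fun i => ((lam i : ℝ) : ℂ)) * star V)).trace
        = (((U * Wp) * V * diagonal (fun i => ((lam i : ℝ) : ℂ))) * star V).trace := by
          congr 1; simp only [mul_assoc]
      _ = (star V * ((U * Wp) * V * diagonal (fun i => ((lam i : ℝ) : ℂ)))).trace :=
          Matrix.trace_mul_comm _ _
      _ = ((star V * (U * Wp) * V) * diagonal (fun i => ((lam i : ℝ) : ℂ))).trace := by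
          congr 1; simp only [mul_assoc]
      _ = ∑ i, G i i * ((lam i : ℝ) : ℂ) := by rw [← hG, trace_mul_diag']
  have htrP : traceNorm M = ∑ i, lam i := by
    rw [traceNorm, ← hPdef, hspec]
    have : (V * diagonal (fun i => ((lam i : ℝ) : ℂ)) * star V).trace
        = ∑ i, ((lam i : ℝ) : ℂ) := by
      rw [Matrix.trace_mul_cycle, hV1, one_mul]
      simp [Matrix.trace, Matrix.diag]
    rw [this, ← Complex.ofReal_sum]
    simp
  rw [htr, htrP, Complex.re_sum]
  apply Finset.sum_le_sum
  intro i _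
  have : (G i i * ((lam i : ℝ) : ℂ)).re = (G i i).re * lam i := by
    simp [Complex.mul_re]
  rw [this]
  calc (G i i).re * lam i ≤ 1 * lam i :=
        mul_le_mul_of_nonneg_right (unitary_diag_re_le_one hGU i) (hlam i)
    _ = lam i := one_mul _

lemma trace_conjTranspose_mul (X Y : Matrix n n ℂ) :
    (Xᴴ * Y).trace = ∑ p : n × n, (starRingEnd ℂ) (X p.1 p.2) * Y p.1 p.2 := by
  rw [Matrix.trace, Fintype.sum_prod_type]
  simp only [Matrix.diag_apply, Matrix.mul_apply, Matrix.conjTranspose_apply]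
  rw [Finset.sum_comm]
  rfl

/-- Cauchy–Schwarz for the Frobenius inner product -/
lemma cs_frobenius (X Y : Matrix n n ℂ) :
    ((Xᴴ * Y).trace).re ≤ Real.sqrt ((Xᴴ * X).trace.re) * Real.sqrt ((Yᴴ * Y).trace.re) := by
  set fX : EuclideanSpace ℂ (n × n) := (WithLp.equiv 2 _).symm (fun p => X p.1 p.2) with hfX
  set fY : EuclideanSpace ℂ (n × n) := (WithLp.equiv 2 _).symm (fun p => Y p.1 p.2) with hfY
  have hinner : ∀ (Z W : Matrix n n ℂ),
      ⟪(WithLp.equiv 2 ((n × n) → ℂ)).symm (fun p => Z p.1 p.2),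
       (WithLp.equiv 2 ((n × n) → ℂ)).symm (fun p => W p.1 p.2)⟫_ℂ = (Zᴴ * W).trace := by
    intro Z W
    rw [PiLp.inner_apply, trace_conjTranspose_mul]
    exact Finset.sum_congr rfl fun p _ => by simp [RCLike.inner_apply]; ring
  have h1 : Complex.re ⟪fX, fY⟫_ℂ ≤ ‖⟪fX, fY⟫_ℂ‖ := Complex.re_le_norm _
  have h2 : ‖⟪fX, fY⟫_ℂ‖ ≤ ‖fX‖ * ‖fY‖ := norm_inner_le_norm fX fY
  have hnX : ‖fX‖ = Real.sqrt ((Xᴴ * X).trace.re) := by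
    rw [@norm_eq_sqrt_re_inner ℂ, hfX, hinner]
    rw [RCLike.re_to_complex]
  have hnY : ‖fY‖ = Real.sqrt ((Yᴴ * Y).trace.re) := by
    rw [@norm_eq_sqrt_re_inner ℂ, hfY, hinner]
    rw [RCLike.re_to_complex]
  have := le_trans h1 h2
  rw [hnX, hnY] at this
  have hre : Complex.re ⟪fX, fY⟫_ℂ = ((Xᴴ * Y).trace).re := by
    rw [hfX, hfY, hinner]
  rw [← hre]
  exact this

lemma conj_diag_entry (V X : Matrix n n ℂ) (i : n) :
    (star V * X * V) i i = star (fun k => V k i) ⬝ᵥ (X *ᵥ (fun k => V k i)) := by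
  simp only [Matrix.mul_apply, dotProduct, Matrix.mulVec, Matrix.star_apply,
    Pi.star_apply, dotProduct]
  rw [Finset.sum_congr rfl (fun a _ => by rw [Finset.sum_mul])]
  rw [Finset.sum_comm]
  apply Finset.sum_congr rfl
  intro a _
  rw [Finset.mul_sum]
  apply Finset.sum_congr rfl
  intro b _
  ring

lemma psd_conj_diag_re_nonneg {X : Matrix n n ℂ} (hX : X.PosSemidef) (V : Matrix n n ℂ) (i : n) :
    0 ≤ ((star V * X * V) i i).re := by
  rw [conj_diag_entry]
  exact hX.re_dotProduct_nonneg _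

/-- Powers–Størmer inequality -/
lemma powers_stormer {A B : Matrix n n ℂ} (hA : A.PosSemidef) (hB : B.PosSemidef) :
    ((A - B) * (A - B)).trace.re ≤ traceNorm (A * A - B * B) := by
  set H : Matrix n n ℂ := A - B with hHdef
  have hH : H.IsHermitian := hA.1.sub hB.1
  obtain ⟨V, lam, W, hV1, hV2, hspec, hWU, hWHerm, hWH, hHW, htn⟩ := herm_struct H hH
  set C : Matrix n n ℂ := A + B with hCdef
  set absH : Matrix n n ℂ := V * diagonal (fun i => ((|lam i| : ℝ) : ℂ)) * star V with habsH
  -- step 1: (W * (A*A - B*B)).trace = (absH * C).trace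
  have hHC : H * C + C * H = (A*A - B*B) + (A*A - B*B) := by
    rw [hHdef, hCdef]; noncomm_ring
  have e1 : (W * (H*C)).trace + (W * (C*H)).trace
      = (W * (A*A - B*B)).trace + (W * (A*A - B*B)).trace := by
    rw [← Matrix.trace_add, ← Matrix.mul_add, hHC, Matrix.mul_add, Matrix.trace_add]
  have e2 : (W * (H*C)).trace + (W * (C*H)).trace = (absH * C).trace + (absH * C).trace := by
    have t1 : (W * (H*C)).trace = (absH * C).trace := by
      rw [← mul_assoc, hWH]
    have t2 : (W * (C*H)).trace = (absH * C).trace := by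
      calc (W * (C*H)).trace = ((W * C) * H).trace := by rw [mul_assoc]
        _ = (H * (W * C)).trace := Matrix.trace_mul_comm _ _
        _ = ((H * W) * C).trace := by rw [mul_assoc]
        _ = (absH * C).trace := by rw [hHW]
    rw [t1, t2]
  have key : (W * (A*A - B*B)).trace = (absH * C).trace := by
    have := e1.symm.trans e2
    have h2 : (2:ℂ) * (W * (A*A - B*B)).trace = (2:ℂ) * (absH * C).trace := by
      rw [two_mul, two_mul, this]
    exact mul_left_cancel₀ two_ne_zero h2
  -- step 2: (absH * C).trace = ∑ i, |lam i| * g i  where g i = (star V * C * V) i i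
  have step2 : (absH * C).trace = ∑ i, ((|lam i| : ℝ) : ℂ) * ((star V * C * V) i i) := by
    calc (absH * C).trace
        = ((V * (diagonal (fun i => ((|lam i| : ℝ) : ℂ)) * (star V * C))).trace) := by
          rw [habsH]; congr 1; simp only [mul_assoc]
      _ = ((diagonal (fun i => ((|lam i| : ℝ) : ℂ)) * (star V * C)) * V).trace :=
          Matrix.trace_mul_comm _ _
      _ = (diagonal (fun i => ((|lam i| : ℝ) : ℂ)) * (star V * C * V)).trace := by
          congr 1; simp only [mul_assoc]
      _ = ∑ i, ((|lam i| : ℝ) : ℂ) * ((star V * C * V) i i) := trace_diag_mul _ _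
  -- step 3: diag entries of star V * H * V
  have hdiagH : star V * H * V = diagonal (fun i => ((lam i : ℝ) : ℂ)) := by
    rw [hspec]
    calc star V * (V * diagonal (fun i => ((lam i : ℝ) : ℂ)) * star V) * V
        = (star V * V) * diagonal (fun i => ((lam i : ℝ) : ℂ)) * (star V * V) := by
          simp only [mul_assoc]
      _ = diagonal (fun i => ((lam i : ℝ) : ℂ)) := by rw [hV1, one_mul, mul_one]
  -- step 4: re of (star V * C * V) i i ≥ |lam i|
  have step4 : ∀ i, |lam i| ≤ ((star V * C * V) i i).re := by
    intro i
    have hCmH : C - H = B + B := by rw [hCdef, hHdef]; noncomm_ring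
    have hCpH : C + H = A + A := by rw [hCdef, hHdef]; noncomm_ring
    have hBB : (B + B).PosSemidef := hB.add hB
    have hAA : (A + A).PosSemidef := hA.add hA
    have h1 : 0 ≤ ((star V * (C - H) * V) i i).re := by
      rw [hCmH]; exact psd_conj_diag_re_nonneg hBB V i
    have h2 : 0 ≤ ((star V * (C + H) * V) i i).re := by
      rw [hCpH]; exact psd_conj_diag_re_nonneg hAA V i
    have hsub : (star V * (C - H) * V) i i = (star V * C * V) i i - ((lam i : ℝ) : ℂ) := by
      have : star V * (C - H) * V = star V * C * V - star V * H * V := by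
        rw [Matrix.mul_sub, Matrix.sub_mul]
      rw [this, hdiagH]
      simp [Matrix.sub_apply, Matrix.diagonal_apply_eq]
    have hadd : (star V * (C + H) * V) i i = (star V * C * V) i i + ((lam i : ℝ) : ℂ) := by
      have : star V * (C + H) * V = star V * C * V + star V * H * V := by
        rw [Matrix.mul_add, Matrix.add_mul]
      rw [this, hdiagH]
      simp [Matrix.add_apply, Matrix.diagonal_apply_eq]
    rw [hsub] at h1
    rw [hadd] at h2
    simp only [Complex.sub_re, Complex.add_re, Complex.ofReal_re] at h1 h2
    rw [abs_le]
    constructor <;> linarith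
  -- step 5: (H*H).trace = ∑ lam^2
  have step5 : (H * H).trace = ∑ i, (((lam i)^2 : ℝ) : ℂ) := by
    conv_lhs => rw [hspec]
    rw [conj_mul_conj hV1, trace_conj _ hV1]
    apply Finset.sum_congr rfl
    intro i _
    rw [← Complex.ofReal_mul, sq]
  -- assemble
  have main : ((A - B) * (A - B)).trace.re ≤ (W * (A*A - B*B)).trace.re := by
    rw [← hHdef, key, step2, step5, Complex.re_sum, Complex.re_sum]
    apply Finset.sum_le_sum
    intro i _
    have : ((((|lam i| : ℝ)) : ℂ) * ((star V * C * V) i i)).re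
        = |lam i| * ((star V * C * V) i i).re := by
      simp [Complex.mul_re]
    rw [this]
    have h5 : (((lam i ^ 2 : ℝ)) : ℂ).re = lam i ^ 2 := Complex.ofReal_re _
    rw [h5]
    calc lam i ^ 2 = |lam i| * |lam i| := by rw [sq]; exact (abs_mul_abs_self _).symm
      _ ≤ |lam i| * ((star V * C * V) i i).re :=
          mul_le_mul_of_nonneg_left (step4 i) (abs_nonneg _)
  exact le_trans main (re_trace_unitary_mul_le _ _ hWU)

lemma matSqrt_eq {A : Matrix n n ℂ} (h : A.PosSemidef) : matSqrt A = posSemidefSqrt h := by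
  rw [matSqrt, dif_pos h]

lemma traceNorm_nonneg (A : Matrix n n ℂ) : 0 ≤ traceNorm A :=
  (psd_trace_real (Matrix.posSemidef_conjTranspose_mul_self A).posSemidef_sqrt).2


end FvdGAux

set_option maxHeartbeats 1000000 in
theorem fuchs_van_de_graaf {n : Type*} [Fintype n] [DecidableEq n]
    (ρ σ : Matrix n n ℂ) (hρ : IsDensity ρ) (hσ : IsDensity σ) :
    1 - Real.sqrt (fidelity ρ σ) ≤ (1 / 2) * traceNorm (ρ - σ) ∧
    (1 / 2) * traceNorm (ρ - σ) ≤ Real.sqrt (1 - fidelity ρ σ) := by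
  obtain ⟨hρp, hρt⟩ := hρ
  obtain ⟨hσp, hσt⟩ := hσ
  set A : Matrix n n ℂ := posSemidefSqrt hρp with hAdef
  set B : Matrix n n ℂ := posSemidefSqrt hσp with hBdef
  have hA : A.PosSemidef := hρp.posSemidef_sqrt
  have hB : B.PosSemidef := hσp.posSemidef_sqrt
  have hAA : A * A = ρ := hρp.sqrt_mul_self
  have hBB : B * B = σ := hσp.sqrt_mul_self
  set M : Matrix n n ℂ := A * B with hMdef
  set t : ℝ := traceNorm M with htdef
  have ht0 : 0 ≤ t := traceNorm_nonneg M
  have hF : fidelity ρ σ = t ^ 2 := by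
    rw [fidelity, matSqrt_eq hρp, matSqrt_eq hσp]
  have hsqrtF : Real.sqrt (fidelity ρ σ) = t := by
    rw [hF, Real.sqrt_sq ht0]
  -- ======== LOWER BOUND ========
  have hlow : 1 - Real.sqrt (fidelity ρ σ) ≤ (1 / 2) * traceNorm (ρ - σ) := by
    rw [hsqrtF]
    have hps : ((A - B) * (A - B)).trace.re ≤ traceNorm (ρ - σ) := by
      have := powers_stormer hA hB
      rwa [hAA, hBB] at this
    have hMtr : M.trace.re ≤ t := by
      have := re_trace_unitary_mul_le M 1 (by simp)
      rwa [one_mul] at this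
    have hexp : ((A - B) * (A - B)).trace = ρ.trace + σ.trace - (M.trace + M.trace) := by
      have h1 : (A - B) * (A - B) = (A * A + B * B) - (A * B + B * A) := by noncomm_ring
      rw [h1, Matrix.trace_sub, Matrix.trace_add, Matrix.trace_add, hAA, hBB]
      rw [Matrix.trace_mul_comm B A]
    have hexp_re : ((A - B) * (A - B)).trace.re = 2 - 2 * M.trace.re := by
      rw [hexp]
      simp only [Complex.sub_re, Complex.add_re, hρt, hσt]
      norm_num
      ring
    linarith
  refine ⟨hlow, ?_⟩
  -- ======== UPPER BOUND ========
  obtain ⟨Wp, hWp1, hWp2⟩ := polar_exists M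
  set P : Matrix n n ℂ := posSemidefSqrt (Matrix.posSemidef_conjTranspose_mul_self M) with hPdef
  have hPt : P.trace = ((t : ℝ) : ℂ) :=
    (psd_trace_real (Matrix.posSemidef_conjTranspose_mul_self M).posSemidef_sqrt).1
  set Uo : Matrix n n ℂ := Wpᴴ with hUodef
  have hUoUo : Uo * Uoᴴ = 1 := by
    rw [hUodef, conjTranspose_conjTranspose]; exact hWp1
  have hMU : (M * Uo).trace = ((t : ℝ) : ℂ) := by
    rw [← hWp2, hUodef]
    calc (Wp * P * Wpᴴ).trace = (Wpᴴ * (Wp * P)).trace := Matrix.trace_mul_comm _ _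
      _ = ((Wpᴴ * Wp) * P).trace := by rw [mul_assoc]
      _ = P.trace := by rw [hWp1, one_mul]
      _ = ((t : ℝ) : ℂ) := hPt
  set B' : Matrix n n ℂ := B * Uo with hB'def
  have hB'B' : B' * B'ᴴ = σ := by
    rw [hB'def, conjTranspose_mul]
    calc B * Uo * (Uoᴴ * Bᴴ) = B * (Uo * Uoᴴ) * Bᴴ := by simp only [mul_assoc]
      _ = B * Bᴴ := by rw [hUoUo, mul_one]
      _ = σ := by rw [hB.1.eq, hBB]
  set C : Matrix n n ℂ := A - B' with hCdef
  set D : Matrix n n ℂ := A + B' with hDdef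
  have hCD : C * Dᴴ + D * Cᴴ = (ρ - σ) + (ρ - σ) := by
    have h1 : C * Dᴴ + D * Cᴴ = (A * Aᴴ - B' * B'ᴴ) + (A * Aᴴ - B' * B'ᴴ) := by
      rw [hCdef, hDdef]
      simp only [conjTranspose_sub, conjTranspose_add]
      noncomm_ring
    rw [h1, hA.1.eq, hAA, hB'B']
  -- sign unitary for ρ - σ
  have hΔh : (ρ - σ).IsHermitian := hρp.1.sub hσp.1
  obtain ⟨V, lam, W, hV1, hV2, hspec, hWU, hWHerm, hWH, hHW, htn⟩ := herm_struct (ρ - σ) hΔh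
  have hWtr : (W * (ρ - σ)).trace = ((traceNorm (ρ - σ) : ℝ) : ℂ) := by
    rw [hWH, trace_conj _ hV1, htn, ← Complex.ofReal_sum]
  -- z + star z = 2 * traceNorm
  set z : ℂ := (W * (C * Dᴴ)).trace with hzdef
  have hstar : (W * (D * Cᴴ)).trace = star z := by
    have h1 : star z = ((W * (C * Dᴴ))ᴴ).trace := by
      rw [hzdef, Matrix.trace_conjTranspose]
    have h2 : (W * (C * Dᴴ))ᴴ = (D * Cᴴ) * W := by
      simp only [conjTranspose_mul, conjTranspose_conjTranspose, hWHerm]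
    rw [h1, h2, Matrix.trace_mul_comm]
  have h2tn : z + star z = ((2 * traceNorm (ρ - σ) : ℝ) : ℂ) := by
    calc z + star z = (W * (C * Dᴴ)).trace + (W * (D * Cᴴ)).trace := by rw [hstar]
      _ = (W * (C * Dᴴ + D * Cᴴ)).trace := by rw [Matrix.mul_add, Matrix.trace_add]
      _ = (W * ((ρ - σ) + (ρ - σ))).trace := by rw [hCD]
      _ = (W * (ρ - σ)).trace + (W * (ρ - σ)).trace := by
          rw [Matrix.mul_add, Matrix.trace_add]
      _ = ((2 * traceNorm (ρ - σ) : ℝ) : ℂ) := by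
          rw [hWtr, ← Complex.ofReal_add]; norm_num; ring
  have htnre : traceNorm (ρ - σ) = z.re := by
    have h := congrArg Complex.re h2tn
    rw [Complex.add_re] at h
    have hc : (star z).re = z.re := Complex.conj_re z
    rw [hc, Complex.ofReal_re] at h
    linarith
  -- trace computations
  have hAB'tr : (A * B').trace = ((t : ℝ) : ℂ) := by
    rw [hB'def, ← mul_assoc, ← hMdef]; exact hMU
  have hB'Atr : (B'ᴴ * A).trace = ((t : ℝ) : ℂ) := by
    have h1 : B'ᴴ * A = (Aᴴ * B')ᴴ := by
      simp [conjTranspose_mul, mul_assoc]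
    rw [h1, Matrix.trace_conjTranspose, hA.1.eq, hAB'tr]
    simp
  have hB'B'tr : (B'ᴴ * B').trace = 1 := by
    have h1 : B'ᴴ * B' = Uoᴴ * ((Bᴴ * B) * Uo) := by
      rw [hB'def]; simp only [conjTranspose_mul, mul_assoc]
    rw [h1, Matrix.trace_mul_comm, mul_assoc, hUoUo, mul_one, hB.1.eq, hBB, hσt]
  have hAAtr : (A * A).trace = 1 := by rw [hAA, hρt]
  have hCC : (Cᴴ * C).trace = ((2 - 2*t : ℝ) : ℂ) := by
    have hc1 : Cᴴ * C = (A * A + B'ᴴ * B') - (A * B' + B'ᴴ * A) := by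
      rw [hCdef, conjTranspose_sub, hA.1.eq]; noncomm_ring
    rw [hc1, Matrix.trace_sub, Matrix.trace_add, Matrix.trace_add,
      hAAtr, hB'B'tr, hAB'tr, hB'Atr]
    push_cast
    ring
  have hDD : (Dᴴ * D).trace = ((2 + 2*t : ℝ) : ℂ) := by
    have hd1 : Dᴴ * D = (A * A + B'ᴴ * B') + (A * B' + B'ᴴ * A) := by
      rw [hDdef, conjTranspose_add, hA.1.eq]; noncomm_ring
    rw [hd1, Matrix.trace_add, Matrix.trace_add, Matrix.trace_add,
      hAAtr, hB'B'tr, hAB'tr, hB'Atr]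
    push_cast
    ring
  have hCCre : (Cᴴ * C).trace.re = 2 - 2*t := by rw [hCC, Complex.ofReal_re]
  have hDDre : (Dᴴ * D).trace.re = 2 + 2*t := by rw [hDD, Complex.ofReal_re]
  have hCCnn : 0 ≤ 2 - 2*t := by
    rw [← hCCre]
    exact (psd_trace_real (Matrix.posSemidef_conjTranspose_mul_self C)).2
  -- Cauchy-Schwarz bound on z.re
  have hzcs : z.re ≤ Real.sqrt (2 + 2*t) * Real.sqrt (2 - 2*t) := by
    have h1 : z = (Dᴴ * (W * C)).trace := by
      rw [hzdef]
      calc (W * (C * Dᴴ)).trace = ((W * C) * Dᴴ).trace := by rw [mul_assoc]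
        _ = (Dᴴ * (W * C)).trace := Matrix.trace_mul_comm _ _
    have h2 : (W * C)ᴴ * (W * C) = Cᴴ * C := by
      calc (W * C)ᴴ * (W * C) = Cᴴ * (Wᴴ * W) * C := by
            simp only [conjTranspose_mul, mul_assoc]
        _ = Cᴴ * C := by rw [hWU, mul_one]
    have := cs_frobenius D (W * C)
    rw [h2, hCCre, hDDre] at this
    rw [h1]
    exact this
  have hfin : traceNorm (ρ - σ) ≤ 2 * Real.sqrt (1 - fidelity ρ σ) := by
    have hs : Real.sqrt (2 + 2*t) * Real.sqrt (2 - 2*t) = 2 * Real.sqrt (1 - t^2) := by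
      rw [← Real.sqrt_mul (by linarith : (0:ℝ) ≤ 2 + 2*t)]
      have h4 : (2 + 2*t) * (2 - 2*t) = 4 * (1 - t^2) := by ring
      rw [h4, Real.sqrt_mul (by norm_num : (0:ℝ) ≤ 4)]
      have : Real.sqrt 4 = 2 := by
        rw [show (4:ℝ) = 2^2 by norm_num, Real.sqrt_sq (by norm_num : (0:ℝ) ≤ 2)]
      rw [this]
    rw [htnre, hF]
    calc z.re ≤ Real.sqrt (2 + 2*t) * Real.sqrt (2 - 2*t) := hzcs
      _ = 2 * Real.sqrt (1 - t^2) := hs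
  linarith
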